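/- (Lemma 2) Let each f_{n,i} : ℝ^p → ℝ be differentiable, μ-strongly convex, with L-Lipschitz gradient. For any x = (x_1,…,x_N) ∈ ℝ^{Np} and gradient table y = (y_{n,i}), the average over index choices of the squared deviation of the stochastic averaging gradient from the optimal gradient satisfies Σ_{n=1}^N (1/q_n) Σ_{j=1}^{q_n} ‖ĝ_n(j) − ∇f_n(x̃*)‖² ≤ 4 L p(y) + 2(2L − μ) [f(x) − f(x*) − ⟨∇f(x*), x − x*⟩]. -/

import Mathlib

open Finset
open scoped RealInnerProductSpace

noncomputable section

/-- Block vectors of `ℝ^{Np}`: one vector of `ℝᵖ` per node. -/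
abbrev Evec (p : ℕ) := EuclideanSpace ℝ (Fin p)

/-- The local objective of node `n`: `f_n(w) = (1/q_n) ∑_i f_{n,i}(w)`. -/
def locf {N p : ℕ} {q : Fin N → ℕ}
    (f : (n : Fin N) → Fin (q n) → Evec p → ℝ) (n : Fin N) (w : Evec p) : ℝ :=
  (q n : ℝ)⁻¹ * ∑ i, f n i w

/-- The local stochastic averaging gradient of node `n` for index choice `j`:
`ĝ_n(j) = ∇f_{n,j}(x_n) − ∇f_{n,j}(y_{n,j}) + (1/q_n) ∑_i ∇f_{n,i}(y_{n,i})`. -/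
def hatg {N p : ℕ} {q : Fin N → ℕ}
    (f : (n : Fin N) → Fin (q n) → Evec p → ℝ)
    (x : Fin N → Evec p)
    (y : (n : Fin N) → Fin (q n) → Evec p)
    (n : Fin N) (j : Fin (q n)) : Evec p :=
  gradient (f n j) (x n) - gradient (f n j) (y n j)
    + (q n : ℝ)⁻¹ • ∑ i, gradient (f n i) (y n i)

/-- `p(y) = ∑_n (1/q_n) ∑_i [f_{n,i}(y_{n,i}) − f_{n,i}(x̃*) − ⟨∇f_{n,i}(x̃*), y_{n,i} − x̃*⟩]`. -/
def ptbl {N p : ℕ} {q : Fin N → ℕ}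
    (f : (n : Fin N) → Fin (q n) → Evec p → ℝ)
    (xstar : Evec p)
    (y : (n : Fin N) → Fin (q n) → Evec p) : ℝ :=
  ∑ n, (q n : ℝ)⁻¹ * ∑ i,
    (f n i (y n i) - f n i xstar - ⟪gradient (f n i) xstar, y n i - xstar⟫)

/-- The aggregate optimality gap `f(x) − f(x*) − ⟨∇f(x*), x − x*⟩`, written blockwise. -/
def optgap {N p : ℕ} {q : Fin N → ℕ}
    (f : (n : Fin N) → Fin (q n) → Evec p → ℝ)
    (xstar : Evec p) (x : Fin N → Evec p) : ℝ :=
  ∑ n, (locf f n (x n) - locf f n xstar - ⟪gradient (locf f n) xstar, x n - xstar⟫)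

/-- The quadratic form `aᵀ (M ⊗ I_p) a` of an extended weight matrix, written blockwise. -/
def quadForm {N p : ℕ} (M : Matrix (Fin N) (Fin N) ℝ) (a : Fin N → Evec p) : ℝ :=
  ∑ n, ⟪a n, ∑ m, M n m • a m⟫

/-- The squared Euclidean norm of a block vector of `ℝ^{Np}`. -/
def sqnormB {N p : ℕ} (a : Fin N → Evec p) : ℝ := ∑ n, ‖a n‖^2

/-- The gradient table obtained from `y` by replacing, at each node `n`, the entry
`i n` by the current iterate `x n`. -/
def tblUpd {N p : ℕ} {q : Fin N → ℕ}
    (x : Fin N → Evec p)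
    (y : (n : Fin N) → Fin (q n) → Evec p)
    (i : (n : Fin N) → Fin (q n)) : (n : Fin N) → Fin (q n) → Evec p :=
  fun n => Function.update (y n) (i n) (x n)

end

section DSAHelpers

open InnerProductSpace

variable {E : Type*} [NormedAddCommGroup E] [InnerProductSpace ℝ E] [CompleteSpace E]

private lemma dsa_hasDerivAt_line {g : E → ℝ} {g' : E → E} (v w : E) (t : ℝ)
    (hg : HasGradientAt g (g' (v + t • w)) (v + t • w)) :
    HasDerivAt (fun s : ℝ => g (v + s • w)) ⟪g' (v + t • w), w⟫ t := by
  have hline : HasDerivAt (fun s : ℝ => v + s • w) w t := by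
    simpa using ((hasDerivAt_id t).smul_const w).const_add v
  have := (hg.hasFDerivAt).comp_hasDerivAt t hline
  simpa [InnerProductSpace.toDual_apply_apply, Function.comp_def] using this

private lemma dsa_convex_lower {h : E → ℝ} {h' : E → E} (hc : ConvexOn ℝ Set.univ h)
    (hg : ∀ w, HasGradientAt h (h' w) w) (u v : E) :
    h v + ⟪h' v, u - v⟫ ≤ h u := by
  set w := u - v with hw
  have hphi : ConvexOn ℝ Set.univ fun t : ℝ => h (v + t • w) := by
    have := hc.comp_affineMap (AffineMap.lineMap v u : ℝ →ᵃ[ℝ] E)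
    have heq : (h ∘ (AffineMap.lineMap v u : ℝ →ᵃ[ℝ] E)) = fun t : ℝ => h (v + t • w) := by
      funext t
      simp only [Function.comp_apply, AffineMap.lineMap_apply_module]
      congr 1
      rw [hw]
      module
    rw [heq] at this
    simpa using this
  have hd : HasDerivAt (fun t : ℝ => h (v + t • w)) ⟪h' (v + (0:ℝ) • w), w⟫ 0 :=
    dsa_hasDerivAt_line v w 0 (hg _)
  have hslope := hphi.le_slope_of_hasDerivAt (Set.mem_univ 0) (Set.mem_univ 1) one_pos hd
  rw [slope_def_field] at hslope
  simp only [zero_smul, add_zero, one_smul] at hslope hd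
  have h1 : v + w = u := by rw [hw]; abel
  rw [h1] at hslope
  simp at hslope
  linarith

private lemma dsa_descent_lemma {g : E → ℝ} {g' : E → E} (hg : ∀ w, HasGradientAt g (g' w) w)
    {ℓ : ℝ} (hlip : ∀ a b, ‖g' a - g' b‖ ≤ ℓ * ‖a - b‖) (u v : E) :
    g u - g v - ⟪g' v, u - v⟫ ≤ ℓ / 2 * ‖u - v‖ ^ 2 := by
  set w := u - v with hw
  set χ : ℝ → ℝ := fun t => g (v + t • w) - t * ⟪g' v, w⟫ - ℓ * t ^ 2 / 2 * ‖w‖ ^ 2 with hχ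
  have hder : ∀ t : ℝ, HasDerivAt χ
      (⟪g' (v + t • w), w⟫ - ⟪g' v, w⟫ - ℓ * t * ‖w‖ ^ 2) t := by
    intro t
    have h1 : HasDerivAt (fun s : ℝ => g (v + s • w)) ⟪g' (v + t • w), w⟫ t :=
      dsa_hasDerivAt_line v w t (hg _)
    have h2 : HasDerivAt (fun s : ℝ => s * ⟪g' v, w⟫) ⟪g' v, w⟫ t := by
      simpa using (hasDerivAt_id t).mul_const (⟪g' v, w⟫)
    have h3 : HasDerivAt (fun s : ℝ => ℓ * s ^ 2 / 2 * ‖w‖ ^ 2) (ℓ * t * ‖w‖ ^ 2) t := by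
      have := (((hasDerivAt_pow 2 t).const_mul ℓ).div_const 2).mul_const (‖w‖ ^ 2)
      refine this.congr_deriv ?_
      ring
    exact (h1.sub h2).sub h3
  have hanti : AntitoneOn χ (Set.Icc (0:ℝ) 1) := by
    apply antitoneOn_of_deriv_nonpos (convex_Icc 0 1)
    · exact fun t _ => ((hder t).continuousAt).continuousWithinAt
    · exact fun t _ => ((hder t).differentiableAt).differentiableWithinAt
    · intro t ht
      rw [interior_Icc] at ht
      rw [(hder t).deriv]
      have hb : ⟪g' (v + t • w) - g' v, w⟫ ≤ ℓ * t * ‖w‖ ^ 2 := by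
        calc ⟪g' (v + t • w) - g' v, w⟫ ≤ ‖g' (v + t • w) - g' v‖ * ‖w‖ :=
              real_inner_le_norm _ _
          _ ≤ (ℓ * ‖v + t • w - v‖) * ‖w‖ := by
              apply mul_le_mul_of_nonneg_right (hlip _ _) (norm_nonneg _)
          _ = ℓ * t * ‖w‖ ^ 2 := by
              rw [add_sub_cancel_left, norm_smul, Real.norm_eq_abs, abs_of_pos ht.1]
              ring
      rw [inner_sub_left] at hb
      linarith
  have h01 := hanti (Set.left_mem_Icc.2 zero_le_one) (Set.right_mem_Icc.2 zero_le_one) zero_le_one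
  have hv1 : v + (1:ℝ) • w = u := by rw [hw]; simp
  have hv0 : v + (0:ℝ) • w = v := by simp
  rw [hχ] at h01
  simp only [hv1, hv0, one_mul, one_pow, zero_mul, zero_pow, mul_zero, sub_zero] at h01
  nlinarith [h01]

private lemma dsa_coco_pos {h : E → ℝ} {h' : E → E} (hc : ConvexOn ℝ Set.univ h)
    (hg : ∀ w, HasGradientAt h (h' w) w) {ℓ : ℝ} (hℓ : 0 < ℓ)
    (hdesc : ∀ a b, h b - h a - ⟪h' a, b - a⟫ ≤ ℓ / 2 * ‖b - a‖ ^ 2) (u v : E) :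
    ‖h' u - h' v‖ ^ 2 ≤ 2 * ℓ * (h u - h v - ⟪h' v, u - v⟫) := by
  set G := h' u - h' v with hG
  set z := u - ℓ⁻¹ • G with hz
  have hzu : z - u = -(ℓ⁻¹ • G) := by rw [hz]; abel
  have h1 : h z - h u - ⟪h' u, z - u⟫ ≤ ℓ / 2 * ‖z - u‖ ^ 2 := hdesc u z
  have h2 : h v + ⟪h' v, z - v⟫ ≤ h z := dsa_convex_lower hc hg z v
  have e1 : ⟪h' v, z - v⟫ = ⟪h' v, u - v⟫ + ⟪h' v, z - u⟫ := by
    rw [← inner_add_right]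
    congr 1
    abel
  have e2 : ⟪h' u, z - u⟫ - ⟪h' v, z - u⟫ = -(ℓ⁻¹ * ‖G‖ ^ 2) := by
    rw [← inner_sub_left, ← hG, hzu, inner_neg_right, real_inner_smul_right,
      real_inner_self_eq_norm_sq]
  have e3 : ‖z - u‖ ^ 2 = ℓ⁻¹ ^ 2 * ‖G‖ ^ 2 := by
    rw [hzu, norm_neg, norm_smul, Real.norm_eq_abs, mul_pow, sq_abs]
  rw [e3] at h1
  have hℓ' : ℓ ≠ 0 := ne_of_gt hℓ
  have key : ℓ / 2 * (ℓ⁻¹ ^ 2 * ‖G‖ ^ 2) - ℓ⁻¹ * ‖G‖ ^ 2 = -(‖G‖ ^ 2 / (2 * ℓ)) := by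
    field_simp
    ring
  have hcomb : h v + ⟪h' v, u - v⟫ + ‖G‖ ^ 2 / (2 * ℓ) ≤ h u := by nlinarith [h1, h2, e1, e2]
  have h3 : ‖G‖ ^ 2 / (2 * ℓ) ≤ h u - h v - ⟪h' v, u - v⟫ := by linarith
  rw [div_le_iff₀ (by positivity : (0:ℝ) < 2 * ℓ)] at h3
  linarith [h3]

private lemma dsa_coco {h : E → ℝ} {h' : E → E} (hc : ConvexOn ℝ Set.univ h)
    (hg : ∀ w, HasGradientAt h (h' w) w) {ℓ : ℝ} (hℓ : 0 ≤ ℓ)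
    (hdesc : ∀ a b, h b - h a - ⟪h' a, b - a⟫ ≤ ℓ / 2 * ‖b - a‖ ^ 2) (u v : E) :
    ‖h' u - h' v‖ ^ 2 ≤ 2 * ℓ * (h u - h v - ⟪h' v, u - v⟫) := by
  set D := h u - h v - ⟪h' v, u - v⟫ with hD
  have hD0 : 0 ≤ D := by
    have := dsa_convex_lower hc hg u v
    rw [hD]; linarith
  have haux : ∀ ε : ℝ, 0 < ε → ‖h' u - h' v‖ ^ 2 ≤ 2 * (ℓ + ε) * D := by
    intro ε hε
    apply dsa_coco_pos hc hg (by linarith : (0:ℝ) < ℓ + ε)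
    intro a b
    calc h b - h a - ⟪h' a, b - a⟫ ≤ ℓ / 2 * ‖b - a‖ ^ 2 := hdesc a b
      _ ≤ (ℓ + ε) / 2 * ‖b - a‖ ^ 2 := by nlinarith [sq_nonneg ‖b - a‖]
  rcases eq_or_lt_of_le hD0 with hD' | hD'
  · have := haux 1 one_pos
    rw [← hD'] at this ⊢
    simpa using this
  · apply le_of_forall_pos_le_add
    intro ε hε
    have := haux (ε / (2 * D)) (by positivity)
    calc ‖h' u - h' v‖ ^ 2 ≤ 2 * (ℓ + ε / (2 * D)) * D := this
      _ = 2 * ℓ * D + ε := by field_simp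

private lemma dsa_hasGradientAt_half_normsq (c : ℝ) (w : E) :
    HasGradientAt (fun x : E => c / 2 * ‖x‖ ^ 2) (c • w) w := by
  rw [hasGradientAt_iff_hasFDerivAt]
  have h1 : HasFDerivAt (fun x : E => ⟪x, x⟫)
      ((fderivInnerCLM ℝ (w, w)).comp ((ContinuousLinearMap.id ℝ E).prod
        (ContinuousLinearMap.id ℝ E))) w :=
    (hasFDerivAt_id w).inner ℝ (hasFDerivAt_id w)
  have h2 := h1.const_mul (c / 2)
  have heq : (fun x : E => c / 2 * ⟪x, x⟫) = fun x : E => c / 2 * ‖x‖ ^ 2 := by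
    funext x; rw [real_inner_self_eq_norm_sq]
  rw [heq] at h2
  refine h2.congr_fderiv ?_
  apply ContinuousLinearMap.ext
  intro v
  simp [toDual_apply_apply, fderivInnerCLM_apply, real_inner_smul_left, real_inner_comm]
  ring

private lemma dsa_hasGradientAt_sub {f g : E → ℝ} {f' g' : E → E} {x : E}
    (hf : HasGradientAt f (f' x) x) (hg : HasGradientAt g (g' x) x) :
    HasGradientAt (fun w => f w - g w) (f' x - g' x) x := by
  rw [hasGradientAt_iff_hasFDerivAt] at *
  have := hf.sub hg
  refine this.congr_fderiv ?_
  apply ContinuousLinearMap.ext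
  intro v
  simp [toDual_apply_apply, inner_sub_left]

private lemma dsa_hasGradientAt_const_mul_sum {ι : Type*} [Fintype ι] (c : ℝ) (f : ι → E → ℝ)
    (g : ι → E) (x : E) (h : ∀ i, HasGradientAt (f i) (g i) x) :
    HasGradientAt (fun w => c * ∑ i, f i w) (c • ∑ i, g i) x := by
  rw [hasGradientAt_iff_hasFDerivAt]
  have h1 : HasFDerivAt (fun w => ∑ i, f i w) (∑ i, toDual ℝ E (g i)) x :=
    HasFDerivAt.fun_sum (fun i _ => (h i).hasFDerivAt)
  have h2 := h1.const_mul c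
  refine h2.congr_fderiv ?_
  apply ContinuousLinearMap.ext
  intro v
  simp [toDual_apply_apply, inner_smul_left, inner_sum, Finset.mul_sum, sum_inner]

private lemma dsa_quad_bregman (c : ℝ) (a b : E) :
    c / 2 * ‖b‖ ^ 2 - c / 2 * ‖a‖ ^ 2 - ⟪c • a, b - a⟫ = c / 2 * ‖b - a‖ ^ 2 := by
  have h1 := norm_sub_sq_real b a
  rw [real_inner_comm a b] at h1
  rw [real_inner_smul_left, inner_sub_right, real_inner_self_eq_norm_sq]
  linear_combination (-(c / 2)) * h1

private lemma dsa_coco_of_lip {g : E → ℝ} (hd : Differentiable ℝ g) (hc : ConvexOn ℝ Set.univ g)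
    {L : ℝ} (hL : 0 ≤ L) (hlip : ∀ a b, ‖gradient g a - gradient g b‖ ≤ L * ‖a - b‖) (u v : E) :
    ‖gradient g u - gradient g v‖ ^ 2 ≤ 2 * L * (g u - g v - ⟪gradient g v, u - v⟫) :=
  dsa_coco hc (fun w => (hd w).hasGradientAt) hL
    (fun a b => dsa_descent_lemma (fun w => (hd w).hasGradientAt) hlip b a) u v

private lemma dsa_strong_coco {g : E → ℝ} (hd : Differentiable ℝ g) {μ L : ℝ} (hμL : μ ≤ L)
    (hsc : StrongConvexOn Set.univ μ g)
    (hlip : ∀ a b, ‖gradient g a - gradient g b‖ ≤ L * ‖a - b‖) (u v : E) :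
    ‖(gradient g u - gradient g v) - μ • (u - v)‖ ^ 2
      ≤ 2 * (L - μ) * ((g u - g v - ⟪gradient g v, u - v⟫) - μ / 2 * ‖u - v‖ ^ 2) := by
  have hg : ∀ w, HasGradientAt (fun x => g x - μ / 2 * ‖x‖ ^ 2)
      (gradient g w - μ • w) w := fun w =>
    dsa_hasGradientAt_sub (f' := gradient g) (g' := fun w => μ • w)
      ((hd w).hasGradientAt) (dsa_hasGradientAt_half_normsq μ w)
  have hcv : ConvexOn ℝ Set.univ fun x => g x - μ / 2 * ‖x‖ ^ 2 :=
    strongConvexOn_iff_convex.mp hsc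
  have hdesc : ∀ a b : E, (g b - μ / 2 * ‖b‖ ^ 2) - (g a - μ / 2 * ‖a‖ ^ 2)
      - ⟪gradient g a - μ • a, b - a⟫ ≤ (L - μ) / 2 * ‖b - a‖ ^ 2 := by
    intro a b
    have hd1 := dsa_descent_lemma (fun w => (hd w).hasGradientAt) hlip b a
    have hq := dsa_quad_bregman μ a b
    rw [inner_sub_left] at *
    linarith
  have h := dsa_coco (h' := fun w => gradient g w - μ • w) hcv hg
    (by linarith : (0:ℝ) ≤ L - μ) hdesc u v
  have e1 : (gradient g u - μ • u) - (gradient g v - μ • v)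
      = (gradient g u - gradient g v) - μ • (u - v) := by
    rw [smul_sub]; abel
  have e2 := dsa_quad_bregman μ v u
  rw [e1, inner_sub_left] at h
  have e3 : g u - μ / 2 * ‖u‖ ^ 2 - (g v - μ / 2 * ‖v‖ ^ 2)
      - (⟪gradient g v, u - v⟫ - ⟪μ • v, u - v⟫)
      = g u - g v - ⟪gradient g v, u - v⟫ - μ / 2 * ‖u - v‖ ^ 2 := by linarith [e2]
  rw [e3] at h
  exact h

private lemma dsa_norm_sub_sq_le_two (a b : E) : ‖a - b‖ ^ 2 ≤ 2 * ‖a‖ ^ 2 + 2 * ‖b‖ ^ 2 := by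
  nlinarith [norm_sub_sq_real a b, norm_add_sq_real a b, sq_nonneg ‖a + b‖]

end DSAHelpers

set_option maxHeartbeats 1000000

/-- **Lemma 2 of the DSA paper.**  If every `f_{n,i}` is differentiable,
`μ`-strongly convex with `L`-Lipschitz gradient, then for any iterate `x` and any
gradient table `y` the average (over the uniform index choice at each node) of the
squared deviation of the stochastic averaging gradient from the optimal gradient
satisfies
`∑_n (1/q_n) ∑_j ‖ĝ_n(j) − ∇f_n(x̃*)‖² ≤ 4L p(y) + 2(2L−μ)[f(x) − f(x*) − ⟨∇f(x*), x−x*⟩]`. -/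
theorem dsa_lemma2_gradient_noise_bound
    {N p : ℕ} {q : Fin N → ℕ} (hq : ∀ n, 0 < q n)
    (μ L : ℝ) (hμ : 0 < μ) (hμL : μ ≤ L)
    (f : (n : Fin N) → Fin (q n) → Evec p → ℝ)
    (hdiff : ∀ n i, Differentiable ℝ (f n i))
    (hsc : ∀ n i, StrongConvexOn Set.univ μ (f n i))
    (hlip : ∀ n i a b, ‖gradient (f n i) a - gradient (f n i) b‖ ≤ L * ‖a - b‖)
    (xstar : Evec p)
    (hxstar : ∀ w, ∑ n, locf f n xstar ≤ ∑ n, locf f n w)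
    (x : Fin N → Evec p)
    (y : (n : Fin N) → Fin (q n) → Evec p) :
    ∑ n, (q n : ℝ)⁻¹ * ∑ j, ‖hatg f x y n j - gradient (locf f n) xstar‖^2
      ≤ 4 * L * ptbl f xstar y + 2 * (2 * L - μ) * optgap f xstar x := by
  classical
  have hL0 : (0:ℝ) ≤ L := le_trans hμ.le hμL
  have key : ∀ n : Fin N, (q n : ℝ)⁻¹ * ∑ j, ‖hatg f x y n j - gradient (locf f n) xstar‖^2
      ≤ 4 * L * ((q n : ℝ)⁻¹ * ∑ i,
          (f n i (y n i) - f n i xstar - ⟪gradient (f n i) xstar, y n i - xstar⟫))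
        + 2 * (2 * L - μ) * (locf f n (x n) - locf f n xstar
            - ⟪gradient (locf f n) xstar, x n - xstar⟫) := by
    intro n
    set c : ℝ := (q n : ℝ)⁻¹ with hcdef
    have hq0 : ((q n : ℝ)) ≠ 0 := Nat.cast_ne_zero.2 (hq n).ne'
    have hcQ : (q n : ℝ) * c = 1 := mul_inv_cancel₀ hq0
    have hc0 : (0:ℝ) ≤ c := by rw [hcdef]; positivity
    set d : Evec p := x n - xstar with hddef
    set δ : ℝ := ‖d‖^2 with hδdef
    have hδ0 : 0 ≤ δ := by rw [hδdef]; positivity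
    set A : Fin (q n) → Evec p :=
      fun j => gradient (f n j) (x n) - gradient (f n j) xstar with hAdef
    set B : Fin (q n) → Evec p :=
      fun j => gradient (f n j) (y n j) - gradient (f n j) xstar with hBdef
    set U : Fin (q n) → Evec p := fun j => A j - μ • d with hUdef
    set Bb : Evec p := c • ∑ j, B j with hBbdef
    set P : Fin (q n) → ℝ :=
      fun j => f n j (y n j) - f n j xstar - ⟪gradient (f n j) xstar, y n j - xstar⟫ with hPdef
    set D : Fin (q n) → ℝ :=
      fun j => f n j (x n) - f n j xstar - ⟪gradient (f n j) xstar, d⟫ with hDdef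
    -- gradient of the local objective
    have hG : gradient (locf f n) xstar = c • ∑ i, gradient (f n i) xstar := by
      refine HasGradientAt.gradient ?_
      have := dsa_hasGradientAt_const_mul_sum c (fun i => f n i)
        (fun i => gradient (f n i) xstar) xstar (fun i => (hdiff n i xstar).hasGradientAt)
      exact this
    -- rewrite of hatg deviation
    have hrw : ∀ j, hatg f x y n j - gradient (locf f n) xstar = A j - B j + Bb := by
      intro j
      rw [hG]
      simp only [hatg, hAdef, hBdef, hBbdef]
      rw [Finset.sum_sub_distrib, smul_sub]
      abel
    have hTrw : ∑ j, ‖hatg f x y n j - gradient (locf f n) xstar‖^2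
        = ∑ j, ‖A j - B j + Bb‖^2 :=
      Finset.sum_congr rfl (fun j _ => by rw [hrw j])
    -- the local Bregman gap
    have hDn : locf f n (x n) - locf f n xstar - ⟪gradient (locf f n) xstar, d⟫
        = c * ∑ j, D j := by
      rw [hG, hDdef]
      simp only [locf, ← hcdef, real_inner_smul_left, sum_inner, Finset.sum_sub_distrib]
      ring
    -- the sum of B's
    have hsumB : (∑ j, B j) = (q n : ℝ) • Bb := by
      rw [hBbdef, smul_smul, hcQ, one_smul]
    have hBb0 : ∑ j, (B j - Bb) = 0 := by
      rw [Finset.sum_sub_distrib, hsumB, Finset.sum_const, Finset.card_univ, Fintype.card_fin,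
        ← Nat.cast_smul_eq_nsmul ℝ, sub_self]
    have hinner0 : ∑ j, ⟪B j - Bb, d⟫ = 0 := by
      rw [← sum_inner, hBb0, inner_zero_left]
    -- variance bound
    have hvar : ∑ j, ‖B j - Bb‖^2 ≤ ∑ j, ‖B j‖^2 := by
      have hs : ∑ j, ⟪B j, Bb⟫ = (q n : ℝ) * ‖Bb‖^2 := by
        rw [← sum_inner, hsumB, real_inner_smul_left, real_inner_self_eq_norm_sq]
      have e : ∑ j, ‖B j - Bb‖^2 = (∑ j, ‖B j‖^2) - (q n : ℝ) * ‖Bb‖^2 := by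
        have : ∀ j : Fin (q n), ‖B j - Bb‖^2 = ‖B j‖^2 - 2 * ⟪B j, Bb⟫ + ‖Bb‖^2 :=
          fun j => norm_sub_sq_real _ _
        rw [Finset.sum_congr rfl (fun j _ => this j), Finset.sum_add_distrib,
          Finset.sum_sub_distrib, ← Finset.mul_sum, hs, Finset.sum_const, Finset.card_univ,
          Fintype.card_fin, nsmul_eq_mul]
        ring
      have hpos : 0 ≤ (q n : ℝ) * ‖Bb‖^2 := by positivity
      rw [e]
      linarith
    -- pointwise expansion
    have hpt : ∀ j, ‖A j - B j + Bb‖^2 ≤ 2 * ‖U j‖^2 + 2 * ‖B j - Bb‖^2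
        + 2 * μ * ⟪U j, d⟫ - 2 * μ * ⟪B j - Bb, d⟫ + μ^2 * δ := by
      intro j
      have hid : A j - B j + Bb = (U j - (B j - Bb)) + μ • d := by
        simp only [hUdef]; abel
      rw [hid]
      have h1 := norm_add_sq_real (U j - (B j - Bb)) (μ • d)
      have h2 : ‖μ • d‖^2 = μ^2 * δ := by
        rw [norm_smul, Real.norm_eq_abs, mul_pow, sq_abs, hδdef]
      have h3 : ⟪U j - (B j - Bb), μ • d⟫ = μ * ⟪U j, d⟫ - μ * ⟪B j - Bb, d⟫ := by
        rw [real_inner_smul_right, inner_sub_left]; ring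
      have h4 : ‖U j - (B j - Bb)‖^2 ≤ 2 * ‖U j‖^2 + 2 * ‖B j - Bb‖^2 :=
        dsa_norm_sub_sq_le_two _ _
      linarith
    have hptsum : ∑ j, ‖A j - B j + Bb‖^2 ≤ 2 * ∑ j, ‖U j‖^2 + 2 * ∑ j, ‖B j - Bb‖^2
        + 2 * μ * ∑ j, ⟪U j, d⟫ - 2 * μ * ∑ j, ⟪B j - Bb, d⟫ + (q n : ℝ) * (μ^2 * δ) := by
      calc ∑ j, ‖A j - B j + Bb‖^2
          ≤ ∑ j, (2 * ‖U j‖^2 + 2 * ‖B j - Bb‖^2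
            + 2 * μ * ⟪U j, d⟫ - 2 * μ * ⟪B j - Bb, d⟫ + μ^2 * δ) :=
            Finset.sum_le_sum (fun j _ => hpt j)
        _ = 2 * ∑ j, ‖U j‖^2 + 2 * ∑ j, ‖B j - Bb‖^2
            + 2 * μ * ∑ j, ⟪U j, d⟫ - 2 * μ * ∑ j, ⟪B j - Bb, d⟫ + (q n : ℝ) * (μ^2 * δ) := by
            rw [Finset.sum_add_distrib, Finset.sum_sub_distrib, Finset.sum_add_distrib,
              Finset.sum_add_distrib, ← Finset.mul_sum, ← Finset.mul_sum, ← Finset.mul_sum,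
              ← Finset.mul_sum, Finset.sum_const, Finset.card_univ, Fintype.card_fin,
              nsmul_eq_mul]
    -- per-index bounds
    have hB2 : ∀ j, ‖B j‖^2 ≤ 2 * L * P j := by
      intro j
      have hcv : ConvexOn ℝ Set.univ (f n j) :=
        (hsc n j).convexOn (fun r => by positivity)
      have := dsa_coco_of_lip (hdiff n j) hcv hL0 (hlip n j) (y n j) xstar
      rw [hBdef, hPdef]
      exact this
    have hU2 : ∀ j, ‖U j‖^2 ≤ 2 * (L - μ) * (D j - μ / 2 * δ) := by
      intro j
      have := dsa_strong_coco (hdiff n j) hμL (hsc n j) (hlip n j) (x n) xstar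
      rw [hUdef, hAdef, hDdef, hδdef, hddef]
      exact this
    have hUd : ∀ j, ⟪U j, d⟫ ≤ D j + L / 2 * δ - μ * δ := by
      intro j
      have hdesc := dsa_descent_lemma (fun w => ((hdiff n j) w).hasGradientAt)
        (hlip n j) xstar (x n)
      have hnorm : ‖xstar - x n‖^2 = δ := by rw [hδdef, hddef, norm_sub_rev]
      rw [hnorm] at hdesc
      have hneg : xstar - x n = -d := by rw [hddef]; abel
      rw [hneg, inner_neg_right] at hdesc
      have hUdA : ⟪U j, d⟫ = ⟪A j, d⟫ - μ * δ := by
        rw [hUdef, inner_sub_left, real_inner_smul_left, real_inner_self_eq_norm_sq, hδdef]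
      have hAd : ⟪A j, d⟫ = ⟪gradient (f n j) (x n), d⟫ - ⟪gradient (f n j) xstar, d⟫ := by
        rw [hAdef, inner_sub_left]
      rw [hUdA, hAd, hDdef]
      linarith
    -- summed per-index bounds
    have hSB : ∑ j, ‖B j‖^2 ≤ 2 * L * ∑ j, P j := by
      calc ∑ j, ‖B j‖^2 ≤ ∑ j, 2 * L * P j := Finset.sum_le_sum (fun j _ => hB2 j)
        _ = 2 * L * ∑ j, P j := by rw [← Finset.mul_sum]
    have hSU : ∑ j, ‖U j‖^2 ≤ 2 * (L - μ) * ((∑ j, D j) - (q n : ℝ) * (μ / 2 * δ)) := by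
      calc ∑ j, ‖U j‖^2 ≤ ∑ j, 2 * (L - μ) * (D j - μ / 2 * δ) :=
            Finset.sum_le_sum (fun j _ => hU2 j)
        _ = 2 * (L - μ) * ((∑ j, D j) - (q n : ℝ) * (μ / 2 * δ)) := by
            rw [← Finset.mul_sum, Finset.sum_sub_distrib, Finset.sum_const, Finset.card_univ,
              Fintype.card_fin, nsmul_eq_mul]
    have hSUd : ∑ j, ⟪U j, d⟫ ≤ (∑ j, D j) + (q n : ℝ) * (L / 2 * δ - μ * δ) := by
      calc ∑ j, ⟪U j, d⟫ ≤ ∑ j, (D j + (L / 2 * δ - μ * δ)) :=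
            Finset.sum_le_sum (fun j _ => by have := hUd j; linarith)
        _ = (∑ j, D j) + (q n : ℝ) * (L / 2 * δ - μ * δ) := by
            rw [Finset.sum_add_distrib, Finset.sum_const, Finset.card_univ,
              Fintype.card_fin, nsmul_eq_mul]
    -- combine
    have hmulUd := mul_le_mul_of_nonneg_left hSUd (by positivity : (0:ℝ) ≤ 2 * μ)
    have hqδ : 0 ≤ ((q n : ℝ) * δ) * (μ * (L - μ)) :=
      mul_nonneg (mul_nonneg (Nat.cast_nonneg _) hδ0)
        (mul_nonneg hμ.le (by linarith))
    have hz : 2 * μ * ∑ j, ⟪B j - Bb, d⟫ = 0 := by rw [hinner0]; ring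
    have final : ∑ j, ‖A j - B j + Bb‖^2
        ≤ 4 * L * ∑ j, P j + (4 * L - 2 * μ) * ∑ j, D j := by
      linarith [hptsum, hvar, hSB, hSU, hmulUd, hz, hqδ]
    rw [hTrw, hDn]
    calc c * ∑ j, ‖A j - B j + Bb‖^2
        ≤ c * (4 * L * ∑ j, P j + (4 * L - 2 * μ) * ∑ j, D j) :=
          mul_le_mul_of_nonneg_left final hc0
      _ = 4 * L * (c * ∑ j, P j) + 2 * (2 * L - μ) * (c * ∑ j, D j) := by ring
  calc ∑ n, (q n : ℝ)⁻¹ * ∑ j, ‖hatg f x y n j - gradient (locf f n) xstar‖^2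
      ≤ ∑ n, (4 * L * ((q n : ℝ)⁻¹ * ∑ i,
          (f n i (y n i) - f n i xstar - ⟪gradient (f n i) xstar, y n i - xstar⟫))
        + 2 * (2 * L - μ) * (locf f n (x n) - locf f n xstar
            - ⟪gradient (locf f n) xstar, x n - xstar⟫)) :=
        Finset.sum_le_sum (fun n _ => key n)
    _ = 4 * L * ptbl f xstar y + 2 * (2 * L - μ) * optgap f xstar x := by
        rw [ptbl, optgap, Finset.mul_sum, Finset.mul_sum, ← Finset.sum_add_distrib]
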